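/- arXiv:2310.06780 — 2 statements merged into one kernel-verified Lean document; each statement's English description precedes it below -/
import Mathlib

section
/- Let ν > 0 be a real number, define s_1 = 4 and s_{k+1} = ⌊10^{ν s_k}⌋·s_k + 1 for k ≥ 1, and set ξ := Σ_{n≥1} 10^{−s_n}. Then for every ε > 0, ξ does not admit approximation exponent ν + ε. -/
open Filter

section S
variable (ν : ℝ) (s : ℕ → ℕ) (hν : 0 < ν) (hs1 : s 1 = 4)
  (hsrec : ∀ k, 1 ≤ k → s (k + 1) = ⌊(10 : ℝ) ^ (ν * (s k : ℝ))⌋₊ * s k + 1)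

include hν in
lemma floor_ge_one : ∀ k, 1 ≤ k → 1 ≤ ⌊(10 : ℝ) ^ (ν * (s k : ℝ))⌋₊ := by
  intro k hk
  apply Nat.le_floor
  push_cast
  calc (1:ℝ) = (10:ℝ) ^ (0:ℝ) := (Real.rpow_zero _).symm
  _ ≤ _ := Real.rpow_le_rpow_of_exponent_le (by norm_num) (by positivity)

include hν hsrec in
lemma s_step : ∀ k, 1 ≤ k → s k + 1 ≤ s (k + 1) := by
  intro k hk
  rw [hsrec k hk]
  have := floor_ge_one ν s hν k hk
  nlinarith [this]

include hν hsrec in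
lemma s_add : ∀ k, 1 ≤ k → ∀ j, s k + j ≤ s (k + j) := by
  intro k hk j
  induction j with
  | zero => simp
  | succ j ih =>
    have h1 : 1 ≤ k + j := le_trans hk (Nat.le_add_right _ _)
    have h2 := s_step ν s hν hsrec (k + j) h1
    have h3 : k + (j + 1) = (k + j) + 1 := by omega
    rw [h3]
    omega

include hν hs1 hsrec in
lemma s_ge : ∀ k, 1 ≤ k → k + 3 ≤ s k := by
  intro k hk
  have h := s_add ν s hν hsrec 1 le_rfl (k - 1)
  rw [hs1] at h
  have h3 : 1 + (k - 1) = k := by omega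
  rw [h3] at h
  omega
lemma pow_ten_inv (m n : ℕ) (h : m ≤ n) : 1/(10:ℝ)^n ≤ 1/(10:ℝ)^m := by
  apply div_le_div_of_nonneg_left (by norm_num) (by positivity)
  exact pow_le_pow_right₀ (by norm_num) h

include hν hs1 hsrec in
lemma sum_f : Summable (fun i => 1/(10:ℝ)^(s (i+1))) := by
  have hg : Summable (fun i : ℕ => (1/10:ℝ)^i) :=
    summable_geometric_of_lt_one (by norm_num) (by norm_num)
  refine Summable.of_nonneg_of_le (fun i => by positivity) (fun i => ?_) hg
  have h1 : i + 1 + 3 ≤ s (i+1) := s_ge ν s hν hs1 hsrec (i+1) (by omega)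
  calc 1/(10:ℝ)^(s (i+1)) ≤ 1/(10:ℝ)^i := pow_ten_inv _ _ (by omega)
  _ = (1/10:ℝ)^i := by rw [div_pow, one_pow]

include hν hs1 hsrec in
lemma tail_lb (n : ℕ) :
    1/(10:ℝ)^(s (n+1)) ≤ ∑' i, 1/(10:ℝ)^(s (i + n + 1)) := by
  have hs : Summable (fun i => 1/(10:ℝ)^(s (i + n + 1))) := by
    have := (summable_nat_add_iff n).2 (sum_f ν s hν hs1 hsrec)
    simpa using this
  have := Summable.le_tsum hs 0 (fun j _ => by positivity)
  simpa using this

include hν hs1 hsrec in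
lemma tail_ub (n : ℕ) (hn : 1 ≤ n) :
    ∑' i, 1/(10:ℝ)^(s (i + n + 1)) ≤ 2/(10:ℝ)^(s (n+1)) := by
  have hs : Summable (fun i => 1/(10:ℝ)^(s (i + n + 1))) := by
    have := (summable_nat_add_iff n).2 (sum_f ν s hν hs1 hsrec)
    simpa using this
  have hg : Summable (fun i : ℕ => (1/10:ℝ)^i * (1/(10:ℝ)^(s (n+1)))) :=
    (summable_geometric_of_lt_one (by norm_num) (by norm_num)).mul_right _
  have hterm : ∀ i, 1/(10:ℝ)^(s (i + n + 1)) ≤ (1/10:ℝ)^i * (1/(10:ℝ)^(s (n+1))) := by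
    intro i
    have h1 : s (n+1) + i ≤ s (n + 1 + i) := s_add ν s hν hsrec (n+1) (by omega) i
    have h2 : i + n + 1 = n + 1 + i := by omega
    rw [h2]
    calc 1/(10:ℝ)^(s (n+1+i)) ≤ 1/(10:ℝ)^(s (n+1) + i) := pow_ten_inv _ _ h1
    _ = (1/10:ℝ)^i * (1/(10:ℝ)^(s (n+1))) := by
        rw [pow_add]
        field_simp
        rw [← mul_pow]; norm_num
  calc ∑' i, 1/(10:ℝ)^(s (i + n + 1)) ≤ ∑' i, (1/10:ℝ)^i * (1/(10:ℝ)^(s (n+1))) :=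
        Summable.tsum_le_tsum hterm hs hg
  _ = (1 - 1/10 : ℝ)⁻¹ * (1/(10:ℝ)^(s (n+1))) := by
        rw [tsum_mul_right, tsum_geometric_of_lt_one (by norm_num) (by norm_num)]
  _ ≤ 2/(10:ℝ)^(s (n+1)) := by
        rw [div_eq_mul_one_div 2]
        gcongr
        norm_num


include hν hs1 hsrec in
lemma A_cast (n : ℕ) (hn : 1 ≤ n) :
    ((∑ i ∈ Finset.range n, 10^(s n - s (i+1)) : ℕ) : ℝ)
      = (∑ i ∈ Finset.range n, 1/(10:ℝ)^(s (i+1))) * 10^(s n) := by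
  push_cast
  rw [Finset.sum_mul]
  apply Finset.sum_congr rfl
  intro i hi
  rw [Finset.mem_range] at hi
  have h1 : s (i+1) ≤ s n := by
    have := s_add ν s hν hsrec (i+1) (by omega) (n - (i+1))
    have h2 : i + 1 + (n - (i+1)) = n := by omega
    rw [h2] at this
    omega
  have h3 : (10:ℝ)^(s n - s (i+1)) * (10:ℝ)^(s (i+1)) = (10:ℝ)^(s n) := by
    rw [← pow_add, Nat.sub_add_cancel h1]
  have h4 : (10:ℝ)^(s (i+1)) ≠ 0 := by positivity
  field_simp
  linarith [h3]

include hν hs1 hsrec in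
lemma A_mod (n : ℕ) (hn : 1 ≤ n) :
    ∃ m : ℕ, (∑ i ∈ Finset.range n, 10^(s n - s (i+1)) : ℕ) = 10 * m + 1 := by
  obtain ⟨n', rfl⟩ : ∃ n', n = n' + 1 := ⟨n - 1, by omega⟩
  rw [Finset.sum_range_succ, Nat.sub_self, pow_zero]
  have hdvd : 10 ∣ ∑ i ∈ Finset.range n', 10^(s (n'+1) - s (i+1)) := by
    apply Finset.dvd_sum
    intro i hi
    rw [Finset.mem_range] at hi
    have h1 : s (i+1) < s (n'+1) := by
      have h2 := s_add ν s hν hsrec (i+1) (by omega) (n' - i)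
      have h3 : i + 1 + (n' - i) = n' + 1 := by omega
      rw [h3] at h2
      omega
    exact dvd_pow_self 10 (by omega)
  obtain ⟨m, hm⟩ := hdvd
  exact ⟨m, by omega⟩


include hν hs1 hsrec in
set_option maxHeartbeats 2000000 in
lemma key_bound (ε : ℝ) (hε : 0 < ε) (P qk : ℤ) (W : ℝ) (hq : 1 < qk) (hW : 0 < W)
    (h2 : |(∑' i : ℕ, 1/(10:ℝ)^(s (i+1))) - (P:ℝ)/(qk:ℝ)| < (qk:ℝ)^(-W))
    (h1 : 0 < |(∑' i : ℕ, 1/(10:ℝ)^(s (i+1))) - (P:ℝ)/(qk:ℝ)|) :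
    W / (qk:ℝ)^(ν+ε) ≤
      max 8 (max 2 (2 + (max 4 (Real.log 2/(ν*Real.log 10) + 1)) * Real.log 10 / Real.log 2)) := by
  set ξ := ∑' i : ℕ, 1/(10:ℝ)^(s (i+1)) with hξ
  set B : ℝ := Real.log 2/(ν*Real.log 10) with hB
  set M : ℝ := max 4 (B + 1) with hM
  set C2 : ℝ := 2 + M * Real.log 10 / Real.log 2 with hC2
  set Q : ℕ := qk.toNat with hQ
  have hQ2 : 2 ≤ Q := by omega
  have hQcast : (qk:ℝ) = (Q:ℝ) := by
    have : (Q:ℤ) = qk := Int.toNat_of_nonneg (by omega)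
    exact_mod_cast this.symm
  have hq0 : (0:ℝ) < (qk:ℝ) := by exact_mod_cast (by omega : (0:ℤ) < qk)
  have hq1 : (1:ℝ) < (qk:ℝ) := by exact_mod_cast hq
  have hq2 : (2:ℝ) ≤ (qk:ℝ) := by exact_mod_cast (by omega : (2:ℤ) ≤ qk)
  have hlogq : Real.log 2 ≤ Real.log (qk:ℝ) := Real.log_le_log (by norm_num) hq2
  have hlog2 : (0:ℝ) < Real.log 2 := Real.log_pos (by norm_num)
  have hlogq0 : (0:ℝ) < Real.log (qk:ℝ) := lt_of_lt_of_le hlog2 hlogq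
  have hlog10 : (0:ℝ) < Real.log 10 := Real.log_pos (by norm_num)
  have hqpow1 : (1:ℝ) ≤ (qk:ℝ)^(ν+ε) := by
    calc (1:ℝ) = (qk:ℝ)^(0:ℝ) := (Real.rpow_zero _).symm
    _ ≤ _ := Real.rpow_le_rpow_of_exponent_le hq1.le (by linarith)
  -- existence of n
  have hex : ∃ n, 1 ≤ n ∧ 4 * Q * 10^(s n) ≤ 10^(s (n+1)) := by
    set n₀ := max (⌈B⌉₊) (4*Q) + 1 with hn₀
    refine ⟨n₀, by omega, ?_⟩
    have hsge : n₀ + 3 ≤ s n₀ := s_ge ν s hν hs1 hsrec n₀ (by omega)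
    have hBs : B ≤ (s n₀ : ℝ) := by
      have h1 : (⌈B⌉₊ : ℝ) ≤ (s n₀ : ℝ) := by exact_mod_cast (by omega : ⌈B⌉₊ ≤ s n₀)
      exact le_trans (Nat.le_ceil B) h1
    have hF2 : 2 ≤ ⌊(10:ℝ)^(ν * (s n₀ : ℝ))⌋₊ := by
      apply Nat.le_floor
      have hlog : Real.log 2 ≤ ν * (s n₀:ℝ) * Real.log 10 := by
        rw [hB, div_le_iff₀ (by positivity)] at hBs
        nlinarith
      calc ((2:ℕ):ℝ) = Real.exp (Real.log 2) := by rw [Real.exp_log (by norm_num : (0:ℝ) < 2)]; norm_num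
      _ ≤ Real.exp (Real.log 10 * (ν * (s n₀:ℝ))) := by
          apply Real.exp_le_exp.mpr; nlinarith
      _ = (10:ℝ)^(ν * (s n₀:ℝ)) := (Real.rpow_def_of_pos (by norm_num) _).symm
    have hrec := hsrec n₀ (by omega)
    have hmul : 2 * s n₀ ≤ ⌊(10:ℝ)^(ν * (s n₀ : ℝ))⌋₊ * s n₀ := Nat.mul_le_mul_right _ hF2
    have hs1' : 2 * s n₀ + 1 ≤ s (n₀ + 1) := by omega
    have h4Q : 4 * Q ≤ 10 ^ (s n₀ + 1) := by
      have h1 : 4*Q < n₀ + 1 := by omega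
      have h2 : n₀ + 1 ≤ 10 ^ (n₀+1) := Nat.le_of_lt (Nat.lt_pow_self (by norm_num))
      have h3 : 10 ^ (n₀+1) ≤ 10 ^ (s n₀ + 1) := Nat.pow_le_pow_right (by norm_num) (by omega)
      omega
    calc 4 * Q * 10^(s n₀) ≤ 10^(s n₀ + 1) * 10^(s n₀) := Nat.mul_le_mul_right _ h4Q
    _ = 10 ^ (2 * s n₀ + 1) := by rw [← pow_add]; ring_nf
    _ ≤ 10 ^ (s (n₀+1)) := Nat.pow_le_pow_right (by norm_num) hs1'
  obtain ⟨n, ⟨hn1, hfind⟩, hmin⟩ :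
      ∃ n, (1 ≤ n ∧ 4 * Q * 10^(s n) ≤ 10^(s (n+1))) ∧
        ∀ m, m < n → ¬(1 ≤ m ∧ 4 * Q * 10^(s m) ≤ 10^(s (m+1))) :=
    ⟨Nat.find hex, Nat.find_spec hex, fun m hm => Nat.find_min hex hm⟩
  set T : ℝ := ∑ i ∈ Finset.range n, 1/(10:ℝ)^(s (i+1)) with hT
  set A : ℕ := ∑ i ∈ Finset.range n, 10^(s n - s (i+1)) with hA
  have hTA : (A:ℝ) = T * 10^(s n) := A_cast ν s hν hs1 hsrec n hn1
  -- tail bounds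
  have htail : ξ - T = ∑' i, 1/(10:ℝ)^(s (i + n + 1)) := by
    have := Summable.sum_add_tsum_nat_add (f := fun i => 1/(10:ℝ)^(s (i+1))) n (sum_f ν s hν hs1 hsrec)
    rw [hξ, hT, ← this]
    ring
  have hup : ξ - T ≤ 2/(10:ℝ)^(s (n+1)) := htail ▸ tail_ub ν s hν hs1 hsrec n hn1
  have hlo : 1/(10:ℝ)^(s (n+1)) ≤ ξ - T := htail ▸ tail_lb ν s hν hs1 hsrec n
  by_cases hPT : (P:ℝ)/(qk:ℝ) = T
  · -- Case B
    have hqne : (qk:ℝ) ≠ 0 := by positivity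
    have h3 : (P:ℝ) = T * qk := by
      rw [div_eq_iff hqne] at hPT
      exact hPT
    have hPA : P * (10:ℤ)^(s n) = qk * (A:ℤ) := by
      have h4 : (P:ℝ) * (10:ℝ)^(s n) = (qk:ℝ) * (A:ℝ) := by
        rw [hTA, h3]; ring
      exact_mod_cast h4
    obtain ⟨m, hm⟩ := A_mod ν s hν hs1 hsrec n hn1
    have hcop : IsCoprime ((10:ℤ)^(s n)) (A:ℤ) := by
      apply IsCoprime.pow_left
      refine ⟨-(m:ℤ), 1, ?_⟩
      have hAm : (A:ℤ) = 10*(m:ℤ)+1 := by exact_mod_cast hm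
      rw [hAm]; ring
    have hdvd : (10:ℤ)^(s n) ∣ qk := by
      apply hcop.dvd_of_dvd_mul_right
      exact ⟨P, by rw [← hPA]; ring⟩
    have hq10 : (10:ℝ)^(s n) ≤ (qk:ℝ) := by
      have := Int.le_of_dvd (by omega) hdvd
      exact_mod_cast this
    have hlow : 1/(10:ℝ)^(s (n+1)) < (qk:ℝ)^(-W) := by
      calc 1/(10:ℝ)^(s (n+1)) ≤ ξ - T := hlo
      _ ≤ |ξ - (P:ℝ)/qk| := by rw [hPT]; exact le_abs_self _
      _ < _ := h2
    have hpow : (qk:ℝ)^W < (10:ℝ)^(s (n+1)) := by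
      rw [Real.rpow_neg hq0.le, ← one_div] at hlow
      exact lt_of_one_div_lt_one_div (by positivity) hlow
    have hlog1 : W * Real.log (qk:ℝ) < (s (n+1) : ℝ) * Real.log 10 := by
      have := Real.log_lt_log (by positivity) hpow
      rwa [Real.log_rpow hq0, Real.log_pow] at this
    have hlogq10 : (s n : ℝ) * Real.log 10 ≤ Real.log (qk:ℝ) := by
      have := Real.log_le_log (by positivity) hq10
      rwa [Real.log_pow] at this
    have hWs : W * (s n : ℝ) < (s (n+1) : ℝ) := by
      have h5 : W * ((s n:ℝ) * Real.log 10) ≤ W * Real.log (qk:ℝ) :=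
        mul_le_mul_of_nonneg_left hlogq10 hW.le
      nlinarith [h5, hlog1, hlog10]
    have hsn0 : (1:ℝ) ≤ (s n:ℝ) := by
      have := s_ge ν s hν hs1 hsrec n hn1
      exact_mod_cast (by omega : 1 ≤ s n)
    have hflo : (⌊(10:ℝ)^(ν * (s n:ℝ))⌋₊ : ℝ) ≤ (10:ℝ)^(ν * (s n:ℝ)) :=
      Nat.floor_le (by positivity)
    have hsn1 : (s (n+1) : ℝ) ≤ ((10:ℝ)^(ν * (s n:ℝ)) + 1) * (s n:ℝ) := by
      rw [hsrec n hn1]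
      push_cast
      nlinarith [hflo, hsn0]
    have hWb : W < (10:ℝ)^(ν * (s n:ℝ)) + 1 := by
      have h6 := lt_of_lt_of_le hWs hsn1
      exact (mul_lt_mul_iff_left₀ (by linarith : (0:ℝ) < (s n:ℝ))).mp h6
    have hXq : (10:ℝ)^(ν * (s n:ℝ)) ≤ (qk:ℝ)^ν := by
      have h6 : (10:ℝ)^(ν * (s n:ℝ)) = ((10:ℝ)^(s n))^ν := by
        rw [← Real.rpow_natCast 10 (s n), ← Real.rpow_mul (by norm_num), mul_comm]
      rw [h6]
      exact Real.rpow_le_rpow (by positivity) hq10 hν.le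
    have hq_nue : (qk:ℝ)^ν ≤ (qk:ℝ)^(ν+ε) :=
      Real.rpow_le_rpow_of_exponent_le hq1.le (by linarith)
    have hW2 : W < 2 * (qk:ℝ)^(ν+ε) := by linarith [hqpow1]
    rw [div_le_iff₀ (by positivity)]
    calc W ≤ 2 * (qk:ℝ)^(ν+ε) := hW2.le
    _ ≤ max 8 (max 2 C2) * (qk:ℝ)^(ν+ε) := by
        gcongr
        exact le_max_of_le_right (le_max_left _ _)
  · -- Case A
    set N : ℤ := P * (10:ℤ)^(s n) - qk * (A:ℤ) with hNdef
    have hNcast : (N:ℝ) = ((P:ℝ)/(qk:ℝ) - T) * ((qk:ℝ) * (10:ℝ)^(s n)) := by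
      have : ((P:ℝ)/(qk:ℝ) - T) * ((qk:ℝ) * (10:ℝ)^(s n))
          = (P:ℝ) * (10:ℝ)^(s n) - (qk:ℝ) * (T * (10:ℝ)^(s n)) := by
        field_simp
      rw [this, ← hTA, hNdef]
      push_cast
      ring
    have hN0 : N ≠ 0 := by
      intro h0
      have h8 : ((P:ℝ)/(qk:ℝ) - T) * ((qk:ℝ) * (10:ℝ)^(s n)) = 0 := by
        rw [← hNcast, h0]; norm_num
      have h9 : (qk:ℝ) * (10:ℝ)^(s n) ≠ 0 := by positivity
      exact hPT (by have := (mul_eq_zero.mp h8).resolve_right h9; linarith)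
    have hN1 : (1:ℝ) ≤ |(N:ℝ)| := by
      have := Int.one_le_abs hN0
      exact_mod_cast this
    have habs : 1/((qk:ℝ) * (10:ℝ)^(s n)) ≤ |(P:ℝ)/(qk:ℝ) - T| := by
      rw [div_le_iff₀ (by positivity)]
      calc (1:ℝ) ≤ |(N:ℝ)| := hN1
      _ = |(P:ℝ)/(qk:ℝ) - T| * ((qk:ℝ) * (10:ℝ)^(s n)) := by
          rw [hNcast, abs_mul, abs_of_pos (by positivity : (0:ℝ) < (qk:ℝ)*(10:ℝ)^(s n))]
    have hup2 : |ξ - T| ≤ 2/(10:ℝ)^(s (n+1)) := by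
      rw [abs_of_nonneg (le_trans (by positivity : (0:ℝ) ≤ 1/(10:ℝ)^(s (n+1))) hlo)]
      exact hup
    have hfindR : 4*(qk:ℝ)*(10:ℝ)^(s n) ≤ (10:ℝ)^(s (n+1)) := by
      rw [hQcast]
      exact_mod_cast hfind
    have hlow2 : 1/(2*(qk:ℝ)*(10:ℝ)^(s n)) ≤ |ξ - (P:ℝ)/(qk:ℝ)| := by
      have htri : |(P:ℝ)/(qk:ℝ) - T| ≤ |ξ - T| + |ξ - (P:ℝ)/(qk:ℝ)| := by
        have h10 : (P:ℝ)/(qk:ℝ) - T = (ξ - T) - (ξ - (P:ℝ)/(qk:ℝ)) := by ring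
        rw [h10]
        exact abs_sub _ _
      have h11 : 2/(10:ℝ)^(s (n+1)) ≤ 1/(2*(qk:ℝ)*(10:ℝ)^(s n)) := by
        rw [div_le_div_iff₀ (by positivity) (by positivity)]
        nlinarith [hfindR]
      have h12 : 1/((qk:ℝ)*(10:ℝ)^(s n)) - 1/(2*(qk:ℝ)*(10:ℝ)^(s n))
          = 1/(2*(qk:ℝ)*(10:ℝ)^(s n)) := by
        field_simp
        ring
      linarith [habs, htri, hup2, h11]
    have hpowA : (qk:ℝ)^W < 2*(qk:ℝ)*(10:ℝ)^(s n) := by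
      have h13 : 1/(2*(qk:ℝ)*(10:ℝ)^(s n)) < (qk:ℝ)^(-W) := lt_of_le_of_lt hlow2 h2
      rw [Real.rpow_neg hq0.le, ← one_div] at h13
      exact lt_of_one_div_lt_one_div (by positivity) h13
    by_cases hA1 : 2 ≤ n ∧ 2 ≤ ⌊(10:ℝ)^(ν * (s (n-1) : ℝ))⌋₊
    · obtain ⟨hn2, hF2'⟩ := hA1
      have hmin2 : ¬ (4 * Q * 10^(s (n-1)) ≤ 10^(s (n-1+1))) := by
        have := hmin (n-1) (by omega)
        rw [not_and_or] at this
        exact this.resolve_left (by omega)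
      push_neg at hmin2
      have hidx : n - 1 + 1 = n := by omega
      rw [hidx] at hmin2
      have hd2 : s n ≤ 2 * (s n - s (n-1)) := by
        have hrec' := hsrec (n-1) (by omega)
        rw [hidx] at hrec'
        have := Nat.mul_le_mul_right (s (n-1)) hF2'
        omega
      have h10d : 10 ^ (s n - s (n-1)) < 4 * Q := by
        have h15 : 10 ^ (s (n-1)) * 10 ^ (s n - s (n-1)) = 10 ^ (s n) := by
          rw [← pow_add]
          congr 1
          have hrec' := hsrec (n-1) (by omega)
          rw [hidx] at hrec'
          have := Nat.mul_le_mul_right (s (n-1)) hF2'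
          omega
        have h16 : 10 ^ (s (n-1)) * 10 ^ (s n - s (n-1))
            < 4 * Q * 10 ^ (s (n-1)) := by rw [h15]; exact hmin2
        have hpos : 0 < 10 ^ (s (n-1)) := Nat.pow_pos (by norm_num)
        nlinarith [h16, hpos]
      have hsn16 : 10 ^ (s n) < 16 * Q^2 := by
        calc 10 ^ (s n) ≤ 10 ^ (2 * (s n - s (n-1))) :=
              Nat.pow_le_pow_right (by norm_num) hd2
        _ = (10 ^ (s n - s (n-1)))^2 := by rw [← pow_mul, Nat.mul_comm]
        _ < (4*Q)^2 := Nat.pow_lt_pow_left h10d (by norm_num)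
        _ = 16 * Q^2 := by ring
      have hsn16R : (10:ℝ)^(s n) ≤ 16 * (qk:ℝ)^(2:ℕ) := by
        rw [hQcast]
        exact_mod_cast hsn16.le
      have hpowA2 : (qk:ℝ)^W < 32 * (qk:ℝ)^(3:ℕ) := by
        have h17 : 2*(qk:ℝ)*(10:ℝ)^(s n) ≤ 2*(qk:ℝ)*(16 * (qk:ℝ)^(2:ℕ)) := by
          apply mul_le_mul_of_nonneg_left hsn16R (by positivity)
        calc (qk:ℝ)^W < 2*(qk:ℝ)*(10:ℝ)^(s n) := hpowA
        _ ≤ 2*(qk:ℝ)*(16 * (qk:ℝ)^(2:ℕ)) := h17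
        _ = 32 * (qk:ℝ)^(3:ℕ) := by ring
      have h17 := Real.log_lt_log (by positivity) hpowA2
      rw [Real.log_rpow hq0, Real.log_mul (by norm_num) (by positivity),
        Real.log_pow] at h17
      have h18 : Real.log 32 ≤ 5 * Real.log (qk:ℝ) := by
        have h32 : (32:ℝ) = 2^(5:ℕ) := by norm_num
        rw [h32, Real.log_pow]
        push_cast
        nlinarith [hlogq]
      push_cast at h17
      have hW8 : W < 8 := by
        by_contra hc
        push_neg at hc
        have h19 := mul_le_mul_of_nonneg_right hc hlogq0.le
        linarith [h17, h18]
      calc W / (qk:ℝ)^(ν+ε) ≤ W := div_le_self hW.le hqpow1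
      _ ≤ 8 := hW8.le
      _ ≤ _ := le_max_left _ _
    · have hsnM : (s n : ℝ) ≤ M := by
        rcases Nat.lt_or_ge n 2 with h|h
        · have hne1 : n = 1 := by omega
          rw [hne1, hs1]
          exact le_trans (by norm_num) (le_max_left 4 (B+1))
        · have hF1 : ⌊(10:ℝ)^(ν * (s (n-1) : ℝ))⌋₊ < 2 := by
            by_contra hc
            push_neg at hc
            exact hA1 ⟨h, hc⟩
          have hF1' : ⌊(10:ℝ)^(ν * (s (n-1) : ℝ))⌋₊ = 1 := by
            have := floor_ge_one ν s hν (n-1) (by omega)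
            omega
          have hrec' := hsrec (n-1) (by omega)
          have hidx : n - 1 + 1 = n := by omega
          rw [hidx, hF1'] at hrec'
          have hlt2 : (10:ℝ)^(ν * (s (n-1):ℝ)) < 2 := by
            have h20 : ⌊(10:ℝ)^(ν * (s (n-1) : ℝ))⌋₊ < 2 := hF1
            have h21 := (Nat.floor_lt
              (by positivity : (0:ℝ) ≤ (10:ℝ)^(ν * (s (n-1):ℝ)))).mp h20
            exact_mod_cast h21
          have hsB : (s (n-1) : ℝ) < B := by
            have h19 := Real.log_lt_log (by positivity) hlt2
            rw [Real.log_rpow (by norm_num)] at h19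
            rw [hB, lt_div_iff₀ (by positivity)]
            nlinarith [h19]
          have hsn' : (s n : ℝ) = (s (n-1) : ℝ) + 1 := by
            rw [hrec']
            push_cast
            ring
          rw [hsn']
          calc (s (n-1) : ℝ) + 1 ≤ B + 1 := by linarith
          _ ≤ M := le_max_right _ _
      have hlogA : W * Real.log (qk:ℝ)
          < Real.log 2 + Real.log (qk:ℝ) + (s n:ℝ) * Real.log 10 := by
        have h14 := Real.log_lt_log (by positivity) hpowA
        rw [Real.log_rpow hq0, Real.log_mul (by positivity) (by positivity),
          Real.log_mul (by norm_num) (by positivity), Real.log_pow] at h14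
        push_cast at h14
        linarith
      have hM4 : (4:ℝ) ≤ M := le_max_left _ _
      have hX0 : (0:ℝ) ≤ M * Real.log 10 / Real.log 2 :=
        div_nonneg (mul_nonneg (by linarith) hlog10.le) hlog2.le
      have hXlog : M * Real.log 10 / Real.log 2 * Real.log 2 = M * Real.log 10 :=
        div_mul_cancel₀ _ (ne_of_gt hlog2)
      have hMlog : M * Real.log 10 ≤ (M * Real.log 10 / Real.log 2) * Real.log (qk:ℝ) := by
        nlinarith [hXlog, hlogq, hX0]
      have hsnlog : (s n:ℝ) * Real.log 10 ≤ M * Real.log 10 := by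
        nlinarith [hsnM, hlog10]
      have hWC : W < C2 := by
        rw [hC2]
        nlinarith [hlogA, hlogq, hsnlog, hMlog, hlogq0]
      calc W / (qk:ℝ)^(ν+ε) ≤ W := div_le_self hW.le hqpow1
      _ ≤ C2 := hWC.le
      _ ≤ _ := le_max_of_le_right (le_max_right _ _)

end S

/-- `ξ` admits approximation exponent `ν`. -/
def AdmitsExponent (ξ ν : ℝ) : Prop :=
  ∃ (p q : ℕ → ℤ) (ω : ℕ → ℝ),
    (∀ k, 1 < q k) ∧ (∀ k, 0 < ω k) ∧
    (∀ k, 0 < |ξ - (p k : ℝ) / (q k : ℝ)| ∧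
      |ξ - (p k : ℝ) / (q k : ℝ)| < (q k : ℝ) ^ (-(ω k))) ∧
    Tendsto (fun k => ω k / (q k : ℝ) ^ ν) atTop atTop

theorem not_admits_larger_exponent (ν : ℝ) (hν : 0 < ν) (s : ℕ → ℕ)
    (hs1 : s 1 = 4)
    (hsrec : ∀ k, 1 ≤ k → s (k + 1) = ⌊(10 : ℝ) ^ (ν * (s k : ℝ))⌋₊ * s k + 1)
    (ε : ℝ) (hε : 0 < ε) :
    ¬ AdmitsExponent (∑' n : ℕ, 1 / (10 : ℝ) ^ s (n + 1)) (ν + ε) := by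
  rintro ⟨p, q, ω, hq, hω, hpq, htend⟩
  set C := max 8 (max 2 (2 + (max 4 (Real.log 2/(ν*Real.log 10) + 1))
    * Real.log 10 / Real.log 2)) with hC
  obtain ⟨k, hk⟩ := (htend.eventually (eventually_gt_atTop C)).exists
  have hb := key_bound ν s hν hs1 hsrec ε hε (p k) (q k) (ω k) (hq k) (hω k)
    (hpq k).2 (hpq k).1
  rw [← hC] at hb
  linarith [hb, hk]
end

section
/- Let (P, Q, R) be a ℤ-admissible triple of polynomials with R ≠ 0 as a polynomial, and let Ω := {z ∈ ℂ : P(z)·Q(z)·R(z) ≠ 0 and P(z) ≠ 1}. Then the function h̃ : Ω → ℂ given by h̃(z) = Q(z)^{R(z)}·Log(P(z)) (principal branch powers and logarithm) is non-constant on Ω; in particular, for every complex number γ the set {z ∈ Ω : h̃(z) = Log γ} has no accumulation point in Ω. -/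
/-- A ℤ-admissible triple of polynomials. -/
def ZAdmissible (P Q R : Polynomial ℤ) : Prop :=
  P ≠ 0 ∧ Q ≠ 0 ∧ P ≠ 1 ∧
  (P.natDegree = 0 → Q.natDegree ≠ 0 ∧ R ≠ 0) ∧
  (Q.natDegree = 0 → P.natDegree ≠ 0) ∧
  (P.natDegree = 0 ∧ Q.natDegree = 0 → R.natDegree ≠ 0)

/-- The domain `Ω = {z : P(z)Q(z)R(z) ≠ 0 and P(z) ≠ 1}`. -/
def OmegaSet (P Q R : Polynomial ℤ) : Set ℂ :=
  {z : ℂ | Polynomial.aeval z P * Polynomial.aeval z Q * Polynomial.aeval z R ≠ 0 ∧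
    Polynomial.aeval z P ≠ 1}

/-- The function `h̃(z) = Q(z)^{R(z)} · Log P(z)` (principal branch). -/
noncomputable def htilde (P Q R : Polynomial ℤ) (z : ℂ) : ℂ :=
  (Polynomial.aeval z Q : ℂ) ^ (Polynomial.aeval z R : ℂ) *
    Complex.log (Polynomial.aeval z P)

open Polynomial Complex

lemma no_rat_antideriv_aux (S A B : ℂ[X]) (hS : S.natDegree ≠ 0) (hB : B ≠ 0)
    (hcop : IsCoprime A B)
    (h : S * (derivative A * B - A * derivative B) = derivative S * B ^ 2) : False := by
  have hS0 : S ≠ 0 := fun h0 => hS (by simp [h0])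
  have hS' : derivative S ≠ 0 := fun h0 => hS (natDegree_eq_zero_of_derivative_eq_zero h0)
  obtain ⟨ζ, hζ⟩ : ∃ ζ, S.IsRoot ζ :=
    Complex.exists_root (natDegree_pos_iff_degree_pos.mp (Nat.pos_of_ne_zero hS))
  set N : ℂ[X] := derivative A * B - A * derivative B with hN_def
  have hN : N ≠ 0 := by
    intro h0
    rw [h0, mul_zero] at h
    exact (mul_ne_zero hS' (pow_ne_zero 2 hB)) h.symm
  have hmpos : 0 < S.rootMultiplicity ζ := (rootMultiplicity_pos hS0).2 hζ
  have hrmS' : (derivative S).rootMultiplicity ζ = S.rootMultiplicity ζ - 1 :=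
    derivative_rootMultiplicity_of_root hζ
  have key : S.rootMultiplicity ζ + N.rootMultiplicity ζ
      = (derivative S).rootMultiplicity ζ + (B ^ 2).rootMultiplicity ζ := by
    rw [← rootMultiplicity_mul (x := ζ) (mul_ne_zero hS0 hN), h,
      rootMultiplicity_mul (mul_ne_zero hS' (pow_ne_zero 2 hB))]
  by_cases hBζ : B.eval ζ = 0
  · -- A(ζ) ≠ 0
    have hAζ : A.eval ζ ≠ 0 := by
      obtain ⟨u, v, huv⟩ := hcop
      intro hA0
      have := congrArg (eval ζ) huv
      simp [hA0, hBζ] at this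
    have hA0 : A ≠ 0 := fun h0 => hAζ (by simp [h0])
    set k := B.rootMultiplicity ζ with hk_def
    have hkpos : 0 < k := (rootMultiplicity_pos hB).2 hBζ
    have hB' : derivative B ≠ 0 := by
      intro h0
      have := eq_C_of_derivative_eq_zero h0
      rw [this] at hBζ hB
      simp at hBζ
      simp [hBζ] at hB
    have hrmB' : (derivative B).rootMultiplicity ζ = k - 1 :=
      derivative_rootMultiplicity_of_root hBζ
    have hAB' : A * derivative B ≠ 0 := mul_ne_zero hA0 hB'
    have hrmAB' : (A * derivative B).rootMultiplicity ζ = k - 1 := by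
      rw [rootMultiplicity_mul hAB', rootMultiplicity_eq_zero hAζ, zero_add, hrmB']
    have hdvdB : (X - C ζ) ^ k ∣ B := pow_rootMultiplicity_dvd B ζ
    have hrmN : N.rootMultiplicity ζ = k - 1 := by
      have hle : k - 1 ≤ N.rootMultiplicity ζ := by
        rw [le_rootMultiplicity_iff hN]
        apply dvd_sub
        · exact dvd_mul_of_dvd_right (dvd_trans (pow_dvd_pow _ (Nat.sub_le k 1)) hdvdB) _
        · rw [← hrmB']
          exact dvd_mul_of_dvd_right (pow_rootMultiplicity_dvd _ ζ) _
      have hlt : N.rootMultiplicity ζ < k := by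
        by_contra hge
        push_neg at hge
        have hdvdN : (X - C ζ) ^ k ∣ N := dvd_trans (pow_dvd_pow _ hge) (pow_rootMultiplicity_dvd N ζ)
        have : (X - C ζ) ^ k ∣ A * derivative B := by
          have : A * derivative B = derivative A * B - N := by rw [hN_def]; ring
          rw [this]
          exact dvd_sub (dvd_mul_of_dvd_right hdvdB _) hdvdN
        have := (le_rootMultiplicity_iff hAB').2 this
        omega
      omega
    have hrmB2 : (B ^ 2).rootMultiplicity ζ = 2 * k := by
      rw [pow_two, rootMultiplicity_mul (mul_ne_zero hB hB)]
      omega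
    rw [hrmS', hrmN, hrmB2] at key
    omega
  · have hrmB2 : (B ^ 2).rootMultiplicity ζ = 0 := by
      apply rootMultiplicity_eq_zero
      simp [IsRoot, hBζ]
    rw [hrmS', hrmB2] at key
    omega

lemma no_rat_antideriv (S A B : ℂ[X]) (hS : S.natDegree ≠ 0) (hB : B ≠ 0)
    (h : S * (derivative A * B - A * derivative B) = derivative S * B ^ 2) : False := by
  have hS' : derivative S ≠ 0 := fun h0 => hS (natDegree_eq_zero_of_derivative_eq_zero h0)
  by_cases hA : A = 0
  · rw [hA] at h
    simp at h
    rcases h with h | h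
    · exact hS h
    · exact hB h
  · set d := GCDMonoid.gcd A B with hd_def
    have hd : d ≠ 0 := by
      rw [hd_def, Ne, gcd_eq_zero_iff]
      tauto
    have hdA : d ∣ A := gcd_dvd_left A B
    have hdB : d ∣ B := gcd_dvd_right A B
    set A₁ := A / d with hA1_def
    set B₁ := B / d with hB1_def
    have eA : A = d * A₁ := (EuclideanDomain.mul_div_cancel' hd hdA).symm
    have eB : B = d * B₁ := (EuclideanDomain.mul_div_cancel' hd hdB).symm
    have hcop : IsCoprime A₁ B₁ := isCoprime_div_gcd_div_gcd hB
    have hB₁ : B₁ ≠ 0 := by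
      intro h0
      rw [h0, mul_zero] at eB
      exact hB eB
    apply no_rat_antideriv_aux S A₁ B₁ hS hB₁ hcop
    apply mul_left_cancel₀ (pow_ne_zero 2 hd)
    rw [eA, eB, derivative_mul, derivative_mul] at h
    ring_nf at h ⊢
    linear_combination h

lemma poly_eq_zero_of_eval_ball (T : ℂ[X]) (z₀ : ℂ) (ε : ℝ) (hε : 0 < ε)
    (h : ∀ z ∈ Metric.ball z₀ ε, T.eval z = 0) : T = 0 := by
  apply Polynomial.eq_zero_of_infinite_isRoot
  apply Set.Infinite.mono (s := (fun t : ℝ => z₀ + (t : ℂ)) '' Set.Ioo 0 (ε / 2))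
  · rintro z ⟨t, ht, rfl⟩
    apply h
    simp only [Metric.mem_ball, Complex.dist_eq, add_sub_cancel_left]
    rw [Complex.norm_real, Real.norm_eq_abs, abs_of_pos ht.1]
    linarith [ht.2]
  · apply Set.Infinite.image
    · intro x _ y _ hxy
      simpa using hxy
    · exact Set.Ioo_infinite (by linarith)

lemma no_rat_log_antideriv (S A B : ℂ[X]) (hS : S.natDegree ≠ 0) (hB : B ≠ 0)
    (z₀ : ℂ) (ε : ℝ) (hε : 0 < ε) (u : ℂ → ℂ)
    (hu : ∀ z ∈ Metric.ball z₀ ε, HasDerivAt u (S.derivative.eval z / S.eval z) z)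
    (hS0 : ∀ z ∈ Metric.ball z₀ ε, S.eval z ≠ 0)
    (heq : ∀ z ∈ Metric.ball z₀ ε, B.eval z * u z = A.eval z) : False := by
  have key : ∀ z ∈ Metric.ball z₀ ε,
      (S * (derivative A * B - A * derivative B) - derivative S * B ^ 2).eval z = 0 := by
    intro z hz
    have hSz := hS0 z hz
    have hF : HasDerivAt (fun w => B.eval w * u w)
        (B.derivative.eval z * u z + B.eval z * (S.derivative.eval z / S.eval z)) z :=
      (B.hasDerivAt z).mul (hu z hz)
    have hev : (fun w => A.eval w) =ᶠ[nhds z] (fun w => B.eval w * u w) := by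
      filter_upwards [Metric.isOpen_ball.mem_nhds hz] with w hw
      exact (heq w hw).symm
    have hA : HasDerivAt (fun w => A.eval w)
        (B.derivative.eval z * u z + B.eval z * (S.derivative.eval z / S.eval z)) z :=
      hF.congr_of_eventuallyEq hev
    have hder : B.derivative.eval z * u z + B.eval z * (S.derivative.eval z / S.eval z)
        = A.derivative.eval z := (A.hasDerivAt z).unique hA |>.symm
    have e1 : S.eval z * (B.derivative.eval z) * u z
        = S.eval z * A.derivative.eval z - S.derivative.eval z * B.eval z := by
      field_simp at hder
      linear_combination hder
    have h0 := heq z hz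
    simp only [eval_sub, eval_mul, eval_pow]
    linear_combination (-(B.eval z)) * e1 + (S.eval z * B.derivative.eval z) * h0
  have hT := poly_eq_zero_of_eval_ball _ z₀ ε hε key
  rw [sub_eq_zero] at hT
  exact no_rat_antideriv S A B hS hB hT

lemma degne_of_derivative_ne (W : ℂ[X]) (hW : W.derivative ≠ 0) : W.natDegree ≠ 0 := by
  intro h
  exact hW (by rw [eq_C_of_natDegree_eq_zero h]; simp)

lemma local_nonconstant (Pc Qc Rc : ℂ[X])
    (hP1 : Pc ≠ 1) (hR0 : Rc ≠ 0)
    (hPQ : Pc.derivative = 0 → Qc.derivative ≠ 0)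
    (hQP : Qc.derivative = 0 → Pc.derivative ≠ 0)
    (z₀ : ℂ) (ε : ℝ) (hε : 0 < ε) (u v : ℂ → ℂ) (c : ℂ)
    (hu : ∀ z ∈ Metric.ball z₀ ε, HasDerivAt u (Qc.derivative.eval z / Qc.eval z) z)
    (hv : ∀ z ∈ Metric.ball z₀ ε, HasDerivAt v (Pc.derivative.eval z / Pc.eval z) z)
    (hQu : ∀ z ∈ Metric.ball z₀ ε, Complex.exp (u z) = Qc.eval z)
    (hPv : ∀ z ∈ Metric.ball z₀ ε, Complex.exp (v z) = Pc.eval z)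
    (hQconst : Qc.derivative = 0 → ∀ z ∈ Metric.ball z₀ ε, u z = u z₀)
    (hconst : ∀ z ∈ Metric.ball z₀ ε, Complex.exp (Rc.eval z * u z) * v z = c) :
    False := by
  have hq : ∀ z ∈ Metric.ball z₀ ε, Qc.eval z ≠ 0 := fun z hz =>
    (hQu z hz) ▸ Complex.exp_ne_zero _
  have hp : ∀ z ∈ Metric.ball z₀ ε, Pc.eval z ≠ 0 := fun z hz =>
    (hPv z hz) ▸ Complex.exp_ne_zero _
  have hz₀ : z₀ ∈ Metric.ball z₀ ε := Metric.mem_ball_self hε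
  have hQc0 : Qc ≠ 0 := fun h0 => hq z₀ hz₀ (by simp [h0])
  have hPc0 : Pc ≠ 0 := fun h0 => hp z₀ hz₀ (by simp [h0])
  have hc0 : c ≠ 0 := by
    intro h0
    apply hP1
    have hs : Pc - 1 = 0 := by
      apply poly_eq_zero_of_eval_ball _ z₀ ε hε
      intro z hz
      have h1 := hconst z hz
      rw [h0, mul_eq_zero] at h1
      rcases h1 with h1 | h1
      · exact absurd h1 (Complex.exp_ne_zero _)
      · have h2 := hPv z hz
        rw [h1, Complex.exp_zero] at h2
        simp [← h2]
    have := sub_eq_zero.mp hs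
    simpa using this
  have hv0 : ∀ z ∈ Metric.ball z₀ ε, v z ≠ 0 := by
    intro z hz h0
    apply hc0
    rw [← hconst z hz, h0, mul_zero]
  -- the polynomials
  set Ta : ℂ[X] := Qc * Pc * Rc.derivative with hTa_def
  set Tb : ℂ[X] := Pc * Rc * Qc.derivative with hTb_def
  set Te : ℂ[X] := Qc * Pc.derivative with hTe_def
  -- (∗)
  have star : ∀ z ∈ Metric.ball z₀ ε,
      Ta.eval z * u z * v z + Tb.eval z * v z + Te.eval z = 0 := by
    intro z hz
    have hqz := hq z hz
    have hpz := hp z hz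
    have hinner : HasDerivAt (fun w => Rc.eval w * u w)
        (Rc.derivative.eval z * u z + Rc.eval z * (Qc.derivative.eval z / Qc.eval z)) z :=
      (Rc.hasDerivAt z).mul (hu z hz)
    have hexp := hinner.cexp
    have hΦ := hexp.mul (hv z hz)
    have hev : (fun w => Complex.exp (Rc.eval w * u w) * v w) =ᶠ[nhds z] fun _ => c := by
      filter_upwards [Metric.isOpen_ball.mem_nhds hz] with w hw
      exact hconst w hw
    have hzero : HasDerivAt (fun w => Complex.exp (Rc.eval w * u w) * v w) 0 z :=
      (hasDerivAt_const z c).congr_of_eventuallyEq hev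
    have hD := hΦ.unique hzero
    have hE := Complex.exp_ne_zero (Rc.eval z * u z)
    have hfac : Complex.exp (Rc.eval z * u z) *
        ((Rc.derivative.eval z * u z + Rc.eval z * (Qc.derivative.eval z / Qc.eval z)) * v z
          + Pc.derivative.eval z / Pc.eval z) = 0 := by
      linear_combination hD
    have hXY := (mul_eq_zero.mp hfac).resolve_left hE
    have expand : Ta.eval z * u z * v z + Tb.eval z * v z + Te.eval z
        = Pc.eval z * Qc.eval z *
          ((Rc.derivative.eval z * u z + Rc.eval z * (Qc.derivative.eval z / Qc.eval z)) * v z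
            + Pc.derivative.eval z / Pc.eval z) := by
      simp only [hTa_def, hTb_def, hTe_def, eval_mul]
      field_simp
    rw [expand, hXY, mul_zero]
  -- the four cases
  by_cases hP' : Pc.derivative = 0
  · -- P constant
    have hQ' : Qc.derivative ≠ 0 := hPQ hP'
    have key : ∀ z ∈ Metric.ball z₀ ε,
        (Qc * Rc.derivative).eval z * u z = (-(Rc * Qc.derivative)).eval z := by
      intro z hz
      have h1 := star z hz
      have hfac : Pc.eval z * v z *
          ((Qc * Rc.derivative).eval z * u z + (Rc * Qc.derivative).eval z) = 0 := by
        simp only [hTa_def, hTb_def, hTe_def, hP', eval_mul, eval_zero, mul_zero,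
          zero_mul] at h1 ⊢
        linear_combination h1
      have h2 := (mul_eq_zero.mp hfac).resolve_left
        (mul_ne_zero (hp z hz) (hv0 z hz))
      simp only [eval_neg, eval_mul] at h2 ⊢
      linear_combination h2
    by_cases hR' : Rc.derivative = 0
    · have : Rc * Qc.derivative = 0 := by
        apply poly_eq_zero_of_eval_ball _ z₀ ε hε
        intro z hz
        have h3 := key z hz
        simp only [hR', mul_zero, eval_mul, eval_zero, zero_mul, eval_neg] at h3 ⊢
        linear_combination h3
      rcases mul_eq_zero.mp this with h | h
      · exact hR0 h
      · exact hQ' h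
    · exact no_rat_log_antideriv Qc (-(Rc * Qc.derivative)) (Qc * Rc.derivative)
        (degne_of_derivative_ne Qc hQ') (mul_ne_zero hQc0 hR') z₀ ε hε u hu hq key
  by_cases hQ' : Qc.derivative = 0
  · -- Q constant
    have hUc := hQconst hQ'
    have key2 : ∀ z ∈ Metric.ball z₀ ε,
        Pc.eval z * Rc.derivative.eval z * u z₀ * v z + Pc.derivative.eval z = 0 := by
      intro z hz
      have h1 := star z hz
      rw [← hUc z hz]
      have hfac : Qc.eval z *
          (Pc.eval z * Rc.derivative.eval z * u z * v z + Pc.derivative.eval z) = 0 := by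
        simp only [hTa_def, hTb_def, hTe_def, hQ', eval_mul, eval_zero, mul_zero,
          zero_mul] at h1 ⊢
        linear_combination h1
      exact (mul_eq_zero.mp hfac).resolve_left (hq z hz)
    by_cases hμ : u z₀ = 0
    · apply hP'
      apply poly_eq_zero_of_eval_ball _ z₀ ε hε
      intro z hz
      have h3 := key2 z hz
      rw [hμ] at h3
      linear_combination h3
    by_cases hR' : Rc.derivative = 0
    · apply hP'
      apply poly_eq_zero_of_eval_ball _ z₀ ε hε
      intro z hz
      have h3 := key2 z hz
      simp only [hR', eval_zero, mul_zero, zero_mul] at h3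
      linear_combination h3
    · apply no_rat_log_antideriv Pc (-(Pc.derivative)) (C (u z₀) * Pc * Rc.derivative)
        (degne_of_derivative_ne Pc hP')
        (mul_ne_zero (mul_ne_zero (by simpa using hμ) hPc0) hR') z₀ ε hε v hv hp
      intro z hz
      have := key2 z hz
      simp only [eval_mul, eval_C, eval_neg]
      linear_combination this
  by_cases hR' : Rc.derivative = 0
  · -- R constant
    have key3 : ∀ z ∈ Metric.ball z₀ ε,
        (Pc * Rc * Qc.derivative).eval z * v z = (-(Qc * Pc.derivative)).eval z := by
      intro z hz
      have h1 := star z hz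
      simp only [hTa_def, hTb_def, hTe_def, hR', eval_mul, eval_neg, eval_zero, mul_zero,
        zero_mul] at h1 ⊢
      linear_combination h1
    exact no_rat_log_antideriv Pc (-(Qc * Pc.derivative)) (Pc * Rc * Qc.derivative)
      (degne_of_derivative_ne Pc hP')
      (mul_ne_zero (mul_ne_zero hPc0 hR0) hQ') z₀ ε hε v hv hp key3
  -- hard case : P', Q', R' all nonzero
  have hTa0 : Ta ≠ 0 := mul_ne_zero (mul_ne_zero hQc0 hPc0) hR'
  -- derivative of star
  have dstar : ∀ z ∈ Metric.ball z₀ ε,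
      (Pc.eval z * Qc.eval z * Ta.derivative.eval z) * (u z * v z)
      + (Pc.eval z * Ta.eval z * Qc.derivative.eval z) * v z
      + (Qc.eval z * Ta.eval z * Pc.derivative.eval z) * u z
      + (Pc.eval z * Qc.eval z * Tb.derivative.eval z) * v z
      + Qc.eval z * Tb.eval z * Pc.derivative.eval z
      + Pc.eval z * Qc.eval z * Te.derivative.eval z = 0 := by
    intro z hz
    have hqz := hq z hz
    have hpz := hp z hz
    have h1 : HasDerivAt (fun w => Ta.eval w * u w)
        (Ta.derivative.eval z * u z + Ta.eval z * (Qc.derivative.eval z / Qc.eval z)) z :=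
      (Ta.hasDerivAt z).mul (hu z hz)
    have h2 := h1.mul (hv z hz)
    have h3 : HasDerivAt (fun w => Tb.eval w * v w)
        (Tb.derivative.eval z * v z + Tb.eval z * (Pc.derivative.eval z / Pc.eval z)) z :=
      (Tb.hasDerivAt z).mul (hv z hz)
    have h4 := (h2.add h3).add (Te.hasDerivAt z)
    have hev : (fun w => Ta.eval w * u w * v w + Tb.eval w * v w + Te.eval w)
        =ᶠ[nhds z] fun _ => (0 : ℂ) := by
      filter_upwards [Metric.isOpen_ball.mem_nhds hz] with w hw
      exact star w hw
    have hzero : HasDerivAt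
        (fun w => Ta.eval w * u w * v w + Tb.eval w * v w + Te.eval w) 0 z :=
      (hasDerivAt_const z (0 : ℂ)).congr_of_eventuallyEq hev
    have hD := h4.unique hzero
    have expand :
        (Pc.eval z * Qc.eval z * Ta.derivative.eval z) * (u z * v z)
        + (Pc.eval z * Ta.eval z * Qc.derivative.eval z) * v z
        + (Qc.eval z * Ta.eval z * Pc.derivative.eval z) * u z
        + (Pc.eval z * Qc.eval z * Tb.derivative.eval z) * v z
        + Qc.eval z * Tb.eval z * Pc.derivative.eval z
        + Pc.eval z * Qc.eval z * Te.derivative.eval z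
        = Pc.eval z * Qc.eval z *
          ((Ta.derivative.eval z * u z + Ta.eval z * (Qc.derivative.eval z / Qc.eval z)) * v z
            + Ta.eval z * u z * (Pc.derivative.eval z / Pc.eval z)
            + (Tb.derivative.eval z * v z + Tb.eval z * (Pc.derivative.eval z / Pc.eval z))
            + Te.derivative.eval z) := by
      field_simp
      ring
    rw [expand, hD, mul_zero]
  -- the quadratic in u
  set A₂ : ℂ[X] := Qc * Ta ^ 2 * Pc.derivative with hA2_def
  set A₁ : ℂ[X] := Qc * Ta * Tb * Pc.derivative + Qc * Ta * Tb * Pc.derivative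
      + Pc * Qc * Te.derivative * Ta - Pc * Qc * Ta.derivative * Te with hA1_def
  set A₀ : ℂ[X] := Qc * Tb ^ 2 * Pc.derivative + Pc * Qc * Te.derivative * Tb
      - (Pc * Ta * Qc.derivative + Pc * Qc * Tb.derivative) * Te with hA0_def
  have hA2ne : A₂ ≠ 0 := mul_ne_zero (mul_ne_zero hQc0 (pow_ne_zero 2 hTa0)) hP'
  have quad : ∀ z ∈ Metric.ball z₀ ε,
      A₂.eval z * (u z * u z) + A₁.eval z * u z + A₀.eval z = 0 := by
    intro z hz
    have h1 := star z hz
    have h2 := dstar z hz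
    simp only [hA2_def, hA1_def, hA0_def, eval_mul, eval_add, eval_sub, eval_pow]
    linear_combination (Ta.eval z * u z + Tb.eval z) * h2
      - (Pc.eval z * Qc.eval z * Ta.derivative.eval z * u z
        + Pc.eval z * Ta.eval z * Qc.derivative.eval z
        + Pc.eval z * Qc.eval z * Tb.derivative.eval z) * h1
  -- derivative of quad
  have dquad : ∀ z ∈ Metric.ball z₀ ε,
      (Qc.eval z * A₂.derivative.eval z) * (u z * u z)
      + (A₂.eval z * Qc.derivative.eval z + A₂.eval z * Qc.derivative.eval z
          + Qc.eval z * A₁.derivative.eval z) * u z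
      + (A₁.eval z * Qc.derivative.eval z + Qc.eval z * A₀.derivative.eval z) = 0 := by
    intro z hz
    have hqz := hq z hz
    have h1 : HasDerivAt (fun w => A₂.eval w * (u w * u w))
        (A₂.derivative.eval z * (u z * u z)
          + A₂.eval z * ((Qc.derivative.eval z / Qc.eval z) * u z
            + u z * (Qc.derivative.eval z / Qc.eval z))) z :=
      (A₂.hasDerivAt z).mul ((hu z hz).mul (hu z hz))
    have h2 : HasDerivAt (fun w => A₁.eval w * u w)
        (A₁.derivative.eval z * u z + A₁.eval z * (Qc.derivative.eval z / Qc.eval z)) z :=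
      (A₁.hasDerivAt z).mul (hu z hz)
    have h4 := (h1.add h2).add (A₀.hasDerivAt z)
    have hev : (fun w => A₂.eval w * (u w * u w) + A₁.eval w * u w + A₀.eval w)
        =ᶠ[nhds z] fun _ => (0 : ℂ) := by
      filter_upwards [Metric.isOpen_ball.mem_nhds hz] with w hw
      exact quad w hw
    have hzero : HasDerivAt
        (fun w => A₂.eval w * (u w * u w) + A₁.eval w * u w + A₀.eval w) 0 z :=
      (hasDerivAt_const z (0 : ℂ)).congr_of_eventuallyEq hev
    have hD := h4.unique hzero
    have expand :
        (Qc.eval z * A₂.derivative.eval z) * (u z * u z)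
        + (A₂.eval z * Qc.derivative.eval z + A₂.eval z * Qc.derivative.eval z
            + Qc.eval z * A₁.derivative.eval z) * u z
        + (A₁.eval z * Qc.derivative.eval z + Qc.eval z * A₀.derivative.eval z)
        = Qc.eval z *
          (A₂.derivative.eval z * (u z * u z)
            + A₂.eval z * ((Qc.derivative.eval z / Qc.eval z) * u z
              + u z * (Qc.derivative.eval z / Qc.eval z))
            + (A₁.derivative.eval z * u z + A₁.eval z * (Qc.derivative.eval z / Qc.eval z))
            + A₀.derivative.eval z) := by
      field_simp
      ring
    rw [expand, hD, mul_zero]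
  -- linear relation
  set B₁ : ℂ[X] := A₂ * (A₂ * Qc.derivative + A₂ * Qc.derivative + Qc * A₁.derivative)
      - Qc * A₂.derivative * A₁ with hB1_def
  set B₀ : ℂ[X] := A₂ * (A₁ * Qc.derivative + Qc * A₀.derivative)
      - Qc * A₂.derivative * A₀ with hB0_def
  have lin : ∀ z ∈ Metric.ball z₀ ε, B₁.eval z * u z = (-B₀).eval z := by
    intro z hz
    have h1 := quad z hz
    have h2 := dquad z hz
    simp only [hB1_def, hB0_def, eval_mul, eval_add, eval_sub, eval_neg]
    linear_combination A₂.eval z * h2 - (Qc.eval z * A₂.derivative.eval z) * h1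
  by_cases hB₁ : B₁ = 0
  · apply no_rat_antideriv Qc A₁ (-(A₂ + A₂)) (degne_of_derivative_ne Qc hQ')
      (by rw [neg_ne_zero, Ne, add_self_eq_zero]; exact hA2ne)
    simp only [derivative_neg, derivative_add]
    rw [hB1_def] at hB₁
    linear_combination (-2 : ℂ[X]) * hB₁
  · exact no_rat_log_antideriv Qc (-B₀) B₁ (degne_of_derivative_ne Qc hQ') hB₁
      z₀ ε hε u hu hq lin

lemma polynomial_analyticAt (p : ℂ[X]) (z : ℂ) : AnalyticAt ℂ (fun w => p.eval w) z := by
  have := (analyticAt_id : AnalyticAt ℂ id z).aeval_polynomial p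
  simpa [Polynomial.aeval_def, Polynomial.eval₂_eq_eval_map] using this

lemma exists_log_branch (W : ℂ[X]) (z₀ : ℂ) (hW : W.eval z₀ ≠ 0) :
    ∃ ε > 0, ∃ ℓ : ℂ → ℂ,
      (∀ z ∈ Metric.ball z₀ ε, Complex.exp (ℓ z) = W.eval z) ∧
      (∀ z ∈ Metric.ball z₀ ε, HasDerivAt ℓ (W.derivative.eval z / W.eval z) z) ∧
      (∀ z ∈ Metric.ball z₀ ε, |(ℓ z).im| ≤ 2 * Real.pi) ∧
      AnalyticAt ℂ ℓ z₀ ∧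
      (∀ z, ℓ z = Complex.log (W.eval z / W.eval z₀) + Complex.log (W.eval z₀)) := by
  have hcont : ContinuousAt (fun z => W.eval z) z₀ := W.continuous.continuousAt
  rcases Metric.continuousAt_iff.mp hcont (‖W.eval z₀‖ / 2)
    (half_pos (norm_pos_iff.mpr hW)) with ⟨ε, hε, hball⟩
  set ℓ : ℂ → ℂ := fun z => Complex.log (W.eval z / W.eval z₀) + Complex.log (W.eval z₀)
    with hℓ_def
  have hclose : ∀ z ∈ Metric.ball z₀ ε,
      ‖W.eval z - W.eval z₀‖ < ‖W.eval z₀‖ / 2 := by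
    intro z hz
    have := hball (Metric.mem_ball.mp hz)
    rwa [Complex.dist_eq] at this
  have hre : ∀ z ∈ Metric.ball z₀ ε, 0 < (W.eval z / W.eval z₀).re := by
    intro z hz
    have h1 : ‖W.eval z / W.eval z₀ - 1‖ < 1 / 2 := by
      have e : W.eval z / W.eval z₀ - 1 = (W.eval z - W.eval z₀) / W.eval z₀ := by
        field_simp
      rw [e, norm_div, div_lt_iff₀ (norm_pos_iff.mpr hW)]
      calc ‖W.eval z - W.eval z₀‖ < ‖W.eval z₀‖ / 2 := hclose z hz
        _ = 1 / 2 * ‖W.eval z₀‖ := by ring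
    have h2 : |(W.eval z / W.eval z₀).re - 1| < 1 / 2 := by
      calc |(W.eval z / W.eval z₀).re - 1| = |(W.eval z / W.eval z₀ - 1).re| := by
            simp [Complex.sub_re]
        _ ≤ ‖W.eval z / W.eval z₀ - 1‖ := Complex.abs_re_le_norm _
        _ < 1 / 2 := h1
    have := abs_lt.mp h2
    linarith [this.1]
  have hslit : ∀ z ∈ Metric.ball z₀ ε, (W.eval z / W.eval z₀) ∈ Complex.slitPlane :=
    fun z hz => Complex.mem_slitPlane_iff.mpr (Or.inl (hre z hz))
  have hne : ∀ z ∈ Metric.ball z₀ ε, W.eval z ≠ 0 := by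
    intro z hz h0
    have := hre z hz
    rw [h0] at this
    simp at this
  refine ⟨ε, hε, ℓ, ?_, ?_, ?_, ?_, fun z => rfl⟩
  · intro z hz
    rw [hℓ_def]
    rw [Complex.exp_add, Complex.exp_log (div_ne_zero (hne z hz) hW), Complex.exp_log hW]
    field_simp
  · intro z hz
    have hd1 : HasDerivAt (fun w => W.eval w / W.eval z₀) (W.derivative.eval z / W.eval z₀) z :=
      (W.hasDerivAt z).div_const _
    have h2 := ((Complex.hasDerivAt_log (hslit z hz)).comp z hd1).add_const
      (Complex.log (W.eval z₀))
    have heq : (W.eval z / W.eval z₀)⁻¹ * (W.derivative.eval z / W.eval z₀)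
        = W.derivative.eval z / W.eval z := by
      field_simp [hne z hz]
    rwa [heq] at h2
  · intro z hz
    rw [hℓ_def]
    calc |(Complex.log (W.eval z / W.eval z₀) + Complex.log (W.eval z₀)).im|
        = |(Complex.log (W.eval z / W.eval z₀)).im + (Complex.log (W.eval z₀)).im| := by
          rw [Complex.add_im]
      _ ≤ |(Complex.log (W.eval z / W.eval z₀)).im| + |(Complex.log (W.eval z₀)).im| :=
          abs_add_le _ _
      _ ≤ Real.pi + Real.pi := by
          rw [Complex.log_im, Complex.log_im]
          exact add_le_add (Complex.abs_arg_le_pi _) (Complex.abs_arg_le_pi _)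
      _ = 2 * Real.pi := by ring
  · apply AnalyticAt.add
    · exact AnalyticAt.comp (g := Complex.log) (f := fun x => eval x W / eval z₀ W)
        (analyticAt_clog (hslit z₀ (Metric.mem_ball_self hε)))
        ((polynomial_analyticAt W z₀).div analyticAt_const hW)
    · exact analyticAt_const

lemma frequently_finset {α ι : Type*} {l : Filter α} (s : Finset ι) (p : ι → α → Prop)
    (h : ∃ᶠ x in l, ∃ i ∈ s, p i x) : ∃ i ∈ s, ∃ᶠ x in l, p i x := by
  by_contra hc
  push_neg at hc
  have hall : ∀ᶠ x in l, ∀ i ∈ s, ¬ p i x := (Filter.eventually_all_finset s).mpr hc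
  rcases (h.and_eventually hall).exists with ⟨x, ⟨i, his, hpi⟩, hnot⟩
  exact hnot i his hpi

lemma aeval_eq_eval_map (T : Polynomial ℤ) (z : ℂ) :
    (Polynomial.aeval z T : ℂ) = (T.map (algebraMap ℤ ℂ)).eval z := by
  rw [Polynomial.aeval_def, Polynomial.eval₂_eq_eval_map]

lemma int_map_injective : Function.Injective (algebraMap ℤ ℂ) := fun a b h =>
  Int.cast_injective (α := ℂ) (by simpa [algebraMap_int_eq] using h)

lemma natDegree_map_int (T : Polynomial ℤ) :
    (T.map (algebraMap ℤ ℂ)).natDegree = T.natDegree :=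
  Polynomial.natDegree_map_eq_of_injective int_map_injective T

lemma deriv_zero_iff_natDegree_zero (W : ℂ[X]) : W.derivative = 0 ↔ W.natDegree = 0 := by
  constructor
  · exact natDegree_eq_zero_of_derivative_eq_zero
  · intro h
    rw [eq_C_of_natDegree_eq_zero h]
    simp

lemma key_no_freq (P Q R : Polynomial ℤ) (hPQR : ZAdmissible P Q R) (hR : R ≠ 0)
    (z₀ : ℂ) (hz₀ : z₀ ∈ OmegaSet P Q R) (c : ℂ)
    (hfreq : ∃ᶠ z in nhdsWithin z₀ {z₀}ᶜ, z ∈ OmegaSet P Q R ∧ htilde P Q R z = c) :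
    False := by
  obtain ⟨hP0, hQ0, hP1, hadm1, hadm2, _⟩ := hPQR
  set Pc : ℂ[X] := P.map (algebraMap ℤ ℂ) with hPc_def
  set Qc : ℂ[X] := Q.map (algebraMap ℤ ℂ) with hQc_def
  set Rc : ℂ[X] := R.map (algebraMap ℤ ℂ) with hRc_def
  have hPz₀ : Pc.eval z₀ ≠ 0 := by
    have := hz₀.1
    rw [aeval_eq_eval_map, aeval_eq_eval_map, aeval_eq_eval_map] at this
    exact fun h => this (by rw [← hPc_def] at *; rw [h]; ring)
  have hQz₀ : Qc.eval z₀ ≠ 0 := by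
    have := hz₀.1
    rw [aeval_eq_eval_map, aeval_eq_eval_map, aeval_eq_eval_map] at this
    exact fun h => this (by rw [← hQc_def] at *; rw [h]; ring)
  obtain ⟨εP, hεP, ℓP, hexpP, hderP, himP, hanP, hformP⟩ := exists_log_branch Pc z₀ hPz₀
  obtain ⟨εQ, hεQ, ℓQ, hexpQ, hderQ, himQ, hanQ, hformQ⟩ := exists_log_branch Qc z₀ hQz₀
  set ε := min εP εQ with hε_def
  have hε : 0 < ε := lt_min hεP hεQ
  have hsubP : Metric.ball z₀ ε ⊆ Metric.ball z₀ εP :=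
    Metric.ball_subset_ball (min_le_left _ _)
  have hsubQ : Metric.ball z₀ ε ⊆ Metric.ball z₀ εQ :=
    Metric.ball_subset_ball (min_le_right _ _)
  set g : ℤ → ℤ → ℂ → ℂ := fun m k z =>
    Complex.exp ((ℓQ z + (m : ℂ) * (2 * Real.pi * Complex.I)) * Rc.eval z) *
      (ℓP z + (k : ℂ) * (2 * Real.pi * Complex.I)) - c with hg_def
  set I3 : Finset ℤ := {-1, 0, 1} with hI3_def
  -- frequently one of nine branches vanishes
  have freq2 : ∃ᶠ z in nhdsWithin z₀ {z₀}ᶜ, ∃ m ∈ I3, ∃ k ∈ I3, g m k z = 0 := by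
    have hballmem : ∀ᶠ z in nhdsWithin z₀ {z₀}ᶜ, z ∈ Metric.ball z₀ ε :=
      Filter.Eventually.filter_mono nhdsWithin_le_nhds
        (Metric.ball_mem_nhds z₀ hε)
    apply (hfreq.and_eventually hballmem).mono
    rintro z ⟨⟨hzΩ, hzc⟩, hzball⟩
    have hqz : Qc.eval z ≠ 0 := by
      rw [← hexpQ z (hsubQ hzball)]; exact Complex.exp_ne_zero _
    have hpz : Pc.eval z ≠ 0 := by
      rw [← hexpP z (hsubP hzball)]; exact Complex.exp_ne_zero _
    -- branch index for Q
    have hmex : ∃ n : ℤ, Complex.log (Qc.eval z) - ℓQ z = n * (2 * Real.pi * Complex.I) := by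
      apply Complex.exp_eq_one_iff.mp
      rw [Complex.exp_sub, Complex.exp_log hqz, hexpQ z (hsubQ hzball), div_self hqz]
    obtain ⟨m, hm⟩ := hmex
    have hmbound : m ∈ I3 := by
      have him1 : (Complex.log (Qc.eval z)).im - (ℓQ z).im = (m : ℝ) * (2 * Real.pi) := by
        have := congrArg Complex.im hm
        simpa [Complex.sub_im, Complex.mul_im, Complex.mul_re] using this
      have h1 : |(Complex.log (Qc.eval z)).im| ≤ Real.pi := by
        rw [Complex.log_im]; exact Complex.abs_arg_le_pi _
      have h2 : |(ℓQ z).im| ≤ 2 * Real.pi := himQ z (hsubQ hzball)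
      have h3 : |(m : ℝ)| * (2 * Real.pi) ≤ 3 * Real.pi := by
        have h4 : |(m : ℝ) * (2 * Real.pi)| ≤ 3 * Real.pi := by
          rw [← him1]
          calc |(Complex.log (Qc.eval z)).im - (ℓQ z).im|
              ≤ |(Complex.log (Qc.eval z)).im| + |(ℓQ z).im| := abs_sub _ _
            _ ≤ Real.pi + 2 * Real.pi := add_le_add h1 h2
            _ = 3 * Real.pi := by ring
        rwa [abs_mul, abs_of_pos (by positivity : (0:ℝ) < 2 * Real.pi)] at h4
      have h5 : |(m : ℝ)| < 2 := by nlinarith [Real.pi_pos]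
      have h6 : (-2 : ℝ) < (m : ℝ) ∧ (m : ℝ) < 2 := abs_lt.mp h5
      have h7 : (-2 : ℤ) < m ∧ m < 2 := by exact_mod_cast h6
      rw [hI3_def]
      simp only [Finset.mem_insert, Finset.mem_singleton]
      omega
    -- branch index for P
    have hkex : ∃ n : ℤ, Complex.log (Pc.eval z) - ℓP z = n * (2 * Real.pi * Complex.I) := by
      apply Complex.exp_eq_one_iff.mp
      rw [Complex.exp_sub, Complex.exp_log hpz, hexpP z (hsubP hzball), div_self hpz]
    obtain ⟨k, hk⟩ := hkex
    have hkbound : k ∈ I3 := by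
      have him1 : (Complex.log (Pc.eval z)).im - (ℓP z).im = (k : ℝ) * (2 * Real.pi) := by
        have := congrArg Complex.im hk
        simpa [Complex.sub_im, Complex.mul_im, Complex.mul_re] using this
      have h1 : |(Complex.log (Pc.eval z)).im| ≤ Real.pi := by
        rw [Complex.log_im]; exact Complex.abs_arg_le_pi _
      have h2 : |(ℓP z).im| ≤ 2 * Real.pi := himP z (hsubP hzball)
      have h3 : |(k : ℝ)| * (2 * Real.pi) ≤ 3 * Real.pi := by
        have h4 : |(k : ℝ) * (2 * Real.pi)| ≤ 3 * Real.pi := by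
          rw [← him1]
          calc |(Complex.log (Pc.eval z)).im - (ℓP z).im|
              ≤ |(Complex.log (Pc.eval z)).im| + |(ℓP z).im| := abs_sub _ _
            _ ≤ Real.pi + 2 * Real.pi := add_le_add h1 h2
            _ = 3 * Real.pi := by ring
        rwa [abs_mul, abs_of_pos (by positivity : (0:ℝ) < 2 * Real.pi)] at h4
      have h5 : |(k : ℝ)| < 2 := by nlinarith [Real.pi_pos]
      have h6 : (-2 : ℝ) < (k : ℝ) ∧ (k : ℝ) < 2 := abs_lt.mp h5
      have h7 : (-2 : ℤ) < k ∧ k < 2 := by exact_mod_cast h6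
      rw [hI3_def]
      simp only [Finset.mem_insert, Finset.mem_singleton]
      omega
    refine ⟨m, hmbound, k, hkbound, ?_⟩
    rw [hg_def]
    have hlogq : ℓQ z + (m : ℂ) * (2 * Real.pi * Complex.I) = Complex.log (Qc.eval z) := by
      linear_combination -hm
    have hlogp : ℓP z + (k : ℂ) * (2 * Real.pi * Complex.I) = Complex.log (Pc.eval z) := by
      linear_combination -hk
    simp only [hlogq, hlogp]
    rw [sub_eq_zero, ← hzc]
    unfold htilde
    rw [aeval_eq_eval_map, aeval_eq_eval_map, aeval_eq_eval_map, ← hPc_def, ← hQc_def, ← hRc_def]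
    rw [Complex.cpow_def_of_ne_zero hqz]
  -- pigeonhole
  obtain ⟨m, hmI, hfr1⟩ := frequently_finset I3 _ freq2
  obtain ⟨k, hkI, hfr⟩ := frequently_finset I3 _ hfr1
  -- analyticity of the branch
  have hg : AnalyticAt ℂ (g m k) z₀ := by
    rw [hg_def]
    apply AnalyticAt.sub _ analyticAt_const
    apply AnalyticAt.mul
    · apply AnalyticAt.cexp
      exact (hanQ.add analyticAt_const).mul (polynomial_analyticAt Rc z₀)
    · exact hanP.add analyticAt_const
  have heven : ∀ᶠ z in nhds z₀, g m k z = 0 :=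
    hg.frequently_zero_iff_eventually_zero.mp hfr
  obtain ⟨ε'', hε'', hball''⟩ := Metric.eventually_nhds_iff_ball.mp heven
  set ε' := min ε'' ε with hε'_def
  have hε' : 0 < ε' := lt_min hε'' hε
  have hsub1 : Metric.ball z₀ ε' ⊆ Metric.ball z₀ ε'' :=
    Metric.ball_subset_ball (min_le_left _ _)
  have hsub2 : Metric.ball z₀ ε' ⊆ Metric.ball z₀ ε :=
    Metric.ball_subset_ball (min_le_right _ _)
  -- transfer admissibility
  have hP1c : Pc ≠ 1 := by
    intro h
    apply hP1
    have h2 : Polynomial.map (algebraMap ℤ ℂ) P = Polynomial.map (algebraMap ℤ ℂ) 1 := by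
      rw [Polynomial.map_one, ← hPc_def]; exact h
    exact Polynomial.map_injective _ int_map_injective h2
  have hR0c : Rc ≠ 0 := by
    intro h
    apply hR
    have h2 : Polynomial.map (algebraMap ℤ ℂ) R = Polynomial.map (algebraMap ℤ ℂ) 0 := by
      rw [Polynomial.map_zero, ← hRc_def]; exact h
    exact Polynomial.map_injective _ int_map_injective h2
  have hPQc : Pc.derivative = 0 → Qc.derivative ≠ 0 := by
    intro h hq
    have h1 : P.natDegree = 0 := by
      rw [← natDegree_map_int P]
      exact (deriv_zero_iff_natDegree_zero Pc).mp h
    have h2 : Q.natDegree = 0 := by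
      rw [← natDegree_map_int Q]
      exact (deriv_zero_iff_natDegree_zero Qc).mp hq
    exact (hadm1 h1).1 h2
  have hQPc : Qc.derivative = 0 → Pc.derivative ≠ 0 := by
    intro h hp
    have h1 : Q.natDegree = 0 := by
      rw [← natDegree_map_int Q]
      exact (deriv_zero_iff_natDegree_zero Qc).mp h
    have h2 : P.natDegree = 0 := by
      rw [← natDegree_map_int P]
      exact (deriv_zero_iff_natDegree_zero Pc).mp hp
    exact hadm2 h1 h2
  -- apply the local lemma
  apply local_nonconstant Pc Qc Rc hP1c hR0c hPQc hQPc z₀ ε' hε'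
    (fun z => ℓQ z + (m : ℂ) * (2 * Real.pi * Complex.I))
    (fun z => ℓP z + (k : ℂ) * (2 * Real.pi * Complex.I)) c
  · intro z hz
    exact (hderQ z (hsubQ (hsub2 hz))).add_const _
  · intro z hz
    exact (hderP z (hsubP (hsub2 hz))).add_const _
  · intro z hz
    rw [Complex.exp_add, Complex.exp_int_mul_two_pi_mul_I, mul_one]
    exact hexpQ z (hsubQ (hsub2 hz))
  · intro z hz
    rw [Complex.exp_add, Complex.exp_int_mul_two_pi_mul_I, mul_one]
    exact hexpP z (hsubP (hsub2 hz))
  · intro hQd z hz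
    have hQC : Qc = C (Qc.coeff 0) :=
      eq_C_of_natDegree_eq_zero ((deriv_zero_iff_natDegree_zero Qc).mp hQd)
    have : Qc.eval z = Qc.eval z₀ := by rw [hQC]; simp
    rw [hformQ z, hformQ z₀, this]
  · intro z hz
    have := hball'' z (hsub1 hz)
    rw [hg_def] at this
    rw [sub_eq_zero] at this
    rw [← this]
    ring_nf

theorem htilde_nonconstant_and_no_accPt
    (P Q R : Polynomial ℤ) (hPQR : ZAdmissible P Q R) (hR : R ≠ 0) :
    (¬ ∃ c : ℂ, ∀ z ∈ OmegaSet P Q R, htilde P Q R z = c) ∧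
    ∀ γ : ℂ, ∀ z₀ ∈ OmegaSet P Q R,
      ¬ AccPt z₀ (Filter.principal
        {z : ℂ | z ∈ OmegaSet P Q R ∧ htilde P Q R z = Complex.log γ}) := by
  constructor
  · rintro ⟨c, hc⟩
    obtain ⟨hP0, hQ0, hP1, hd1, hd2, hd3⟩ := hPQR
    set Pc : ℂ[X] := P.map (algebraMap ℤ ℂ) with hPc_def
    set Qc : ℂ[X] := Q.map (algebraMap ℤ ℂ) with hQc_def
    set Rc : ℂ[X] := R.map (algebraMap ℤ ℂ) with hRc_def
    have hPc0 : Pc ≠ 0 := (Polynomial.map_ne_zero_iff int_map_injective).mpr hP0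
    have hQc0 : Qc ≠ 0 := (Polynomial.map_ne_zero_iff int_map_injective).mpr hQ0
    have hRc0 : Rc ≠ 0 := (Polynomial.map_ne_zero_iff int_map_injective).mpr hR
    have hPc1 : Pc - 1 ≠ 0 := by
      rw [sub_ne_zero]
      intro h
      apply hP1
      have h2 : Polynomial.map (algebraMap ℤ ℂ) P = Polynomial.map (algebraMap ℤ ℂ) 1 := by
        rw [Polynomial.map_one, ← hPc_def]; exact h
      exact Polynomial.map_injective _ int_map_injective h2
    set Zc : ℂ[X] := Pc * Qc * Rc * (Pc - 1) with hZ_def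
    have hZ0 : Zc ≠ 0 :=
      mul_ne_zero (mul_ne_zero (mul_ne_zero hPc0 hQc0) hRc0) hPc1
    have hmem : ∀ z : ℂ, Zc.eval z ≠ 0 → z ∈ OmegaSet P Q R := by
      intro z hz
      have hfac : Zc.eval z = Pc.eval z * Qc.eval z * Rc.eval z * (Pc.eval z - 1) := by
        rw [hZ_def]; simp [eval_mul, eval_sub]
      constructor
      · rw [aeval_eq_eval_map, aeval_eq_eval_map, aeval_eq_eval_map,
          ← hPc_def, ← hQc_def, ← hRc_def]
        intro h
        apply hz
        rw [hfac, h, zero_mul]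
      · rw [aeval_eq_eval_map, ← hPc_def]
        intro h
        apply hz
        rw [hfac, h]
        ring
    have hfin := Polynomial.finite_setOf_isRoot hZ0
    obtain ⟨z₀, hz₀c⟩ := hfin.infinite_compl.nonempty
    have hroot : Zc.eval z₀ ≠ 0 := hz₀c
    have hz₀Ω := hmem z₀ hroot
    apply key_no_freq P Q R ⟨hP0, hQ0, hP1, hd1, hd2, hd3⟩ hR z₀ hz₀Ω c
    have hclosed : IsClosed {z : ℂ | Zc.eval z = 0} :=
      isClosed_singleton.preimage Zc.continuous
    have hopen : IsOpen {z : ℂ | Zc.eval z ≠ 0} := by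
      have : {z : ℂ | Zc.eval z ≠ 0} = {z : ℂ | Zc.eval z = 0}ᶜ := by
        ext w; simp
      rw [this]
      exact hclosed.isOpen_compl
    have hnhds : {z : ℂ | Zc.eval z ≠ 0} ∈ nhds z₀ := hopen.mem_nhds hroot
    have hev : ∀ᶠ z in nhdsWithin z₀ {z₀}ᶜ, z ∈ OmegaSet P Q R ∧ htilde P Q R z = c := by
      apply Filter.Eventually.filter_mono nhdsWithin_le_nhds
      filter_upwards [hnhds] with z hz
      exact ⟨hmem z hz, hc z (hmem z hz)⟩
    exact hev.frequently
  · intro γ z₀ hz₀ hacc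
    rw [accPt_iff_frequently] at hacc
    apply key_no_freq P Q R hPQR hR z₀ hz₀ (Complex.log γ)
    rw [frequently_nhdsWithin_iff]
    apply hacc.mono
    rintro z ⟨hne, hmem⟩
    exact ⟨hmem, Set.mem_compl_singleton_iff.mpr hne⟩
end
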